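/- Let γ, ω > 0. For any measurable control θ(t) and any solution (r_x(t), R(t)) of the auxiliary system with r_x(t_0)² + R(t_0)² < 1 at some time t_0, one has r_x(t)² + R(t)² < 1 for all t ≥ t_0; in fact 1 - r_x²(t) - R²(t) ≥ (1 - r_x²(t_0) - R²(t_0)) e^{-γ(t - t_0)}. -/

import Mathlib

open Real Set

/-- If a solution of the auxiliary system lies strictly inside the unit disk at
time `t₀`, it stays strictly inside for all `t ≥ t₀`; moreover
`1 - r_x²(t) - R²(t) ≥ (1 - r_x²(t₀) - R²(t₀)) e^{-γ(t-t₀)}`. -/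
theorem stays_in_open_unit_disk (γ ω : ℝ) (hγ : 0 < γ) (hω : 0 < ω)
    (θ rx R : ℝ → ℝ) (hθ : Measurable θ)
    (hdisk : ∀ t, rx t ^ 2 + R t ^ 2 ≤ 1)
    (hrx : ∀ t, HasDerivAt rx (-(γ/2) * rx t - ω * R t * Real.cos (θ t)) t)
    (hR : ∀ t, HasDerivAt R (ω * rx t * Real.cos (θ t)
      - (γ/2) * R t * (1 + Real.sin (θ t)^2) + γ * Real.sin (θ t)) t)
    (t₀ : ℝ) (h₀ : rx t₀ ^ 2 + R t₀ ^ 2 < 1) :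
    ∀ t, t₀ ≤ t →
      rx t ^ 2 + R t ^ 2 < 1 ∧
      (1 - rx t₀ ^ 2 - R t₀ ^ 2) * Real.exp (-γ * (t - t₀))
        ≤ 1 - rx t ^ 2 - R t ^ 2 := by
  set g : ℝ → ℝ := fun t => (1 - rx t ^ 2 - R t ^ 2) * Real.exp (γ * (t - t₀)) with hg
  have key : ∀ t, HasDerivAt g
      (γ * (1 - R t * Real.sin (θ t)) ^ 2 * Real.exp (γ * (t - t₀))) t := by
    intro t
    have hV : HasDerivAt (fun t => 1 - rx t ^ 2 - R t ^ 2)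
        (-(2 * rx t ^ 1 * (-(γ/2) * rx t - ω * R t * Real.cos (θ t)))
          - 2 * R t ^ 1 * (ω * rx t * Real.cos (θ t)
            - (γ/2) * R t * (1 + Real.sin (θ t)^2) + γ * Real.sin (θ t))) t := by
      have h1 := (hrx t).pow 2
      have h2 := (hR t).pow 2
      exact (h1.const_sub 1).sub h2
    have he : HasDerivAt (fun t => Real.exp (γ * (t - t₀)))
        (Real.exp (γ * (t - t₀)) * (γ * 1)) t :=
      (((hasDerivAt_id t).sub_const t₀).const_mul γ).exp
    have : HasDerivAt g _ t := hV.mul he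
    convert this using 1
    ring
  have gmono : Monotone g := by
    apply monotone_of_deriv_nonneg
    · exact fun t => (key t).differentiableAt
    · intro t
      rw [(key t).deriv]
      positivity
  intro t ht
  have hmono := gmono ht
  have hg0 : g t₀ = 1 - rx t₀ ^ 2 - R t₀ ^ 2 := by
    simp [hg]
  have hE : Real.exp (γ * (t - t₀)) > 0 := Real.exp_pos _
  have hgt : g t = (1 - rx t ^ 2 - R t ^ 2) * Real.exp (γ * (t - t₀)) := rfl
  have h2 : (1 - rx t₀ ^ 2 - R t₀ ^ 2) * Real.exp (-γ * (t - t₀))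
      ≤ 1 - rx t ^ 2 - R t ^ 2 := by
    rw [hg0, hgt] at hmono
    have : Real.exp (-γ * (t - t₀)) = (Real.exp (γ * (t - t₀)))⁻¹ := by
      rw [← Real.exp_neg]; ring_nf
    rw [this]
    rw [mul_inv_le_iff₀ hE]
    linarith [hmono]
  refine ⟨?_, h2⟩
  have hpos : 0 < (1 - rx t₀ ^ 2 - R t₀ ^ 2) * Real.exp (-γ * (t - t₀)) := by
    have : 0 < 1 - rx t₀ ^ 2 - R t₀ ^ 2 := by linarith
    positivity
  linarith
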